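/- Let P be a poset with least element 0 and let Z ⊆ P be P-modular. If I ⊆ P satisfies (1) every Z-disjoint S ⊆ I has a supremum in P which lies in I, and (2′) whenever p ∈ I, z ∈ Z and the infimum p∧z exists in P, then p∧z ∈ I, then I is Z-complete. -/
import Mathlib


/-- `S` is `Z`-disjoint: there is `f : S → Z` with `p ≤ f p` and `f p ∧ f q = 0`
for distinct `p, q ∈ S`. -/
def ZDisjoint {β : Type*} [PartialOrder β] [OrderBot β] (Z S : Set β) : Prop :=
  ∃ f : β → β, (∀ p ∈ S, f p ∈ Z ∧ p ≤ f p) ∧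
    ∀ p ∈ S, ∀ q ∈ S, p ≠ q → Disjoint (f p) (f q)

/-- `I` is `Z`-complete: every `Z`-disjoint `S ⊆ I` has a supremum lying in `I`, and
whenever `{p, q}` is `Z`-disjoint with supremum in `I`, both `p` and `q` lie in `I`. -/
def ZComplete {β : Type*} [PartialOrder β] [OrderBot β] (Z I : Set β) : Prop :=
  (∀ S ⊆ I, ZDisjoint Z S → ∃ s, IsLUB S s ∧ s ∈ I) ∧
  (∀ p q s, ZDisjoint Z {p, q} → IsLUB {p, q} s → s ∈ I → p ∈ I ∧ q ∈ I)

/-- `Z` is `S`-central: for every `p ∈ S` and `y ∈ Z` there is `z ∈ Z` with `y ∧ z = 0`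
and `p` the supremum of some `q ≤ y` and `r ≤ z`. -/
def SCentral {β : Type*} [PartialOrder β] [OrderBot β] (Z S : Set β) : Prop :=
  ∀ p ∈ S, ∀ y ∈ Z, ∃ z ∈ Z, Disjoint y z ∧ ∃ q r, q ≤ y ∧ r ≤ z ∧ IsLUB {q, r} p
/-- `Z` is `P`-modular: disjoint pairs in `Z` are modular pairs, i.e. whenever
`y, z ∈ Z` with `y ∧ z = 0`, `p ≤ y`, `q ≤ z` and `p ∨ q` exists, `q` is the greatest
lower bound of `z` and `p ∨ q`. -/
def PModular {β : Type*} [PartialOrder β] [OrderBot β] (Z : Set β) : Prop :=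
  ∀ y ∈ Z, ∀ z ∈ Z, Disjoint y z →
    ∀ p q s, p ≤ y → q ≤ z → IsLUB {p, q} s → IsGLB {z, s} q

/-- If `Z` is `P`-modular and `I` satisfies (1) every `Z`-disjoint `S ⊆ I` has a
supremum lying in `I` and (2′) `p ∧ z ∈ I` whenever `p ∈ I`, `z ∈ Z` and `p ∧ z`
exists, then `I` is `Z`-complete. -/
theorem stmt4 {α : Type*} [PartialOrder α] [OrderBot α] (Z I : Set α)
    (hmod : PModular Z)
    (h1 : ∀ S ⊆ I, ZDisjoint Z S → ∃ s, IsLUB S s ∧ s ∈ I)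
    (h2 : ∀ p ∈ I, ∀ z ∈ Z, ∀ w, IsGLB {p, z} w → w ∈ I) :
    ZComplete Z I := by
  refine ⟨h1, fun p q s hd hlub hs => ?_⟩
  by_cases hpq : p = q
  · subst hpq
    have : s = p := by
      have : ({p, p} : Set α) = {p} := by simp
      rw [this] at hlub
      exact (isLUB_singleton.unique hlub).symm
    subst this; exact ⟨hs, hs⟩
  · obtain ⟨f, hf1, hf2⟩ := hd
    have hp := hf1 p (by simp)
    have hq := hf1 q (by simp)
    have hdisj := hf2 p (by simp) q (by simp) hpq
    have hq' : IsGLB {f q, s} q :=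
      hmod (f p) hp.1 (f q) hq.1 hdisj p q s hp.2 hq.2 hlub
    have hp' : IsGLB {f p, s} p :=
      hmod (f q) hq.1 (f p) hp.1 hdisj.symm q p s hq.2 hp.2
        (by rwa [Set.pair_comm] at hlub)
    constructor
    · exact h2 s hs (f p) hp.1 p (by rwa [Set.pair_comm] at hp')
    · exact h2 s hs (f q) hq.1 q (by rwa [Set.pair_comm] at hq')
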